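/- Suppose [D + C(zI−A)^{-1}B]·[H(zI−Λ)^{-1}G] = −C(zI−A)^{-1}S holds as an identity of rational matrix functions, where (C,A) is observable and (Λ,G) is controllable. Then there exists a matrix Π with AΠ + BH = ΠΛ, CΠ + DH = 0, and ΠG = S. -/

import Mathlib

open Matrix

noncomputable section

/-- Map a complex matrix entrywise to rational functions. -/
def mc {a b : ℕ} (M : Matrix (Fin a) (Fin b) ℂ) : Matrix (Fin a) (Fin b) (RatFunc ℂ) :=
  M.map (⇑(RatFunc.C : ℂ →+* RatFunc ℂ))

/-- The resolvent `(z I − M)⁻¹` as a matrix of rational functions. -/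
def res {a : ℕ} (M : Matrix (Fin a) (Fin a) ℂ) : Matrix (Fin a) (Fin a) (RatFunc ℂ) :=
  ((Matrix.scalar (Fin a) (RatFunc.X : RatFunc ℂ)) - mc M)⁻¹

/-- The "anti-resolvent" `(z I + M)⁻¹`, used for para-hermitian conjugates. -/
def resneg {a : ℕ} (M : Matrix (Fin a) (Fin a) ℂ) : Matrix (Fin a) (Fin a) (RatFunc ℂ) :=
  ((Matrix.scalar (Fin a) (RatFunc.X : RatFunc ℂ)) + mc M)⁻¹

/-- Observability of a pair `(C, A)`. -/
def Observable {p n : ℕ} (C : Matrix (Fin p) (Fin n) ℂ) (A : Matrix (Fin n) (Fin n) ℂ) : Prop :=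
  ∀ v : Fin n → ℂ, (∀ k : ℕ, C *ᵥ ((A ^ k) *ᵥ v) = 0) → v = 0

/-- Controllability of a pair `(Λ, G)`. -/
def Controllable {r m : ℕ} (L : Matrix (Fin r) (Fin r) ℂ) (G : Matrix (Fin r) (Fin m) ℂ) : Prop :=
  ∀ y : Fin r → ℂ, (∀ k : ℕ, y ᵥ* ((L ^ k) * G) = 0) → y = 0

/-- The range (column space) of a matrix, as a submodule of `ℂⁿ`. -/
def mrange {a b : ℕ} (M : Matrix (Fin a) (Fin b) ℂ) : Submodule ℂ (Fin a → ℂ) :=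
  LinearMap.range M.mulVecLin

/-- The set of states reachable from the origin by a finite input sequence
producing identically zero output along the way (the minimal input-containing
subspace `C*(Σ)`). -/
def OutNullReach {n p q : ℕ} (A : Matrix (Fin n) (Fin n) ℂ) (B : Matrix (Fin n) (Fin q) ℂ)
    (C : Matrix (Fin p) (Fin n) ℂ) (D : Matrix (Fin p) (Fin q) ℂ) (x : Fin n → ℂ) : Prop :=
  ∃ (j : ℕ) (ξ : ℕ → (Fin n → ℂ)) (u : ℕ → (Fin q → ℂ)),
    ξ 0 = 0 ∧ (∀ i < j, ξ (i + 1) = A *ᵥ ξ i + B *ᵥ u i ∧ C *ᵥ ξ i + D *ᵥ u i = 0) ∧ ξ j = x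
open Polynomial

abbrev Laur := LaurentSeries ℂ

def tinv : Laur := HahnSeries.single (-1 : ℤ) 1

lemma tinv_pow (k : ℕ) : tinv ^ k = HahnSeries.single (-(k:ℤ)) 1 := by
  induction k with
  | zero => simp [HahnSeries.single_zero_one]
  | succ k ih =>
    rw [pow_succ, ih, tinv, HahnSeries.single_mul_single]
    norm_num
    congr 1
    ring

lemma hahn_sum_coeff {α : Type*} (s : Finset α) (f : α → Laur) (j : ℤ) :
    (∑ i ∈ s, f i).coeff j = ∑ i ∈ s, (f i).coeff j := by
  classical
  induction s using Finset.induction_on with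
  | empty => simp
  | insert _ _ h ih => simp [Finset.sum_insert h, HahnSeries.coeff_add, ih]

lemma algebraMap_laur (a : ℂ) : algebraMap ℂ Laur a = HahnSeries.single 0 a := by
  simp only [RingHom.algebraMap_toAlgebra, RingHom.coe_comp, Function.comp_apply,
    PowerSeries.algebraMap_apply, Algebra.algebraMap_self_apply, HahnSeries.ofPowerSeries_C,
    HahnSeries.C_apply]
  rfl

def polyToL : Polynomial ℂ →+* Laur := (Polynomial.aeval tinv).toRingHom

lemma polyToL_coeff (p : Polynomial ℂ) (k : ℕ) :
    (polyToL p).coeff (-(k:ℤ)) = p.coeff k := by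
  rw [polyToL, AlgHom.toRingHom_eq_coe, RingHom.coe_coe, aeval_def,
    Polynomial.eval₂_eq_sum_range, hahn_sum_coeff]
  have h1 : ∀ i : ℕ, algebraMap ℂ Laur (p.coeff i) * tinv ^ i
      = HahnSeries.single (-(i:ℤ)) (p.coeff i) := by
    intro i
    rw [tinv_pow, algebraMap_laur, HahnSeries.single_mul_single, zero_add, mul_one]
  rw [Finset.sum_congr rfl fun i _ => congrArg (fun s : Laur => s.coeff (-(k:ℤ))) (h1 i)]
  by_cases hk : k < p.natDegree + 1
  · rw [Finset.sum_eq_single k]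
    · simp [HahnSeries.coeff_single_same]
    · intro b _ hb
      exact HahnSeries.coeff_single_of_ne (by simp only [ne_eq, neg_inj, Nat.cast_inj]; omega)
    · intro h; exact absurd (Finset.mem_range.mpr hk) h
  · rw [Finset.sum_eq_zero, eq_comm]
    · exact Polynomial.coeff_eq_zero_of_natDegree_lt (by omega)
    · intro b hb
      have hb' : b < p.natDegree + 1 := Finset.mem_range.mp hb
      exact HahnSeries.coeff_single_of_ne (by simp only [ne_eq, neg_inj, Nat.cast_inj]; omega)

lemma polyToL_injective : Function.Injective polyToL := by
  rw [injective_iff_map_eq_zero]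
  intro p hp
  ext k
  have := polyToL_coeff p k
  rw [hp] at this
  simpa using this.symm

def phi : RatFunc ℂ →+* Laur := IsFractionRing.lift polyToL_injective

lemma phi_algebraMap (p : Polynomial ℂ) : phi (algebraMap _ _ p) = polyToL p :=
  IsFractionRing.lift_algebraMap _ _

lemma phi_C (a : ℂ) : phi (RatFunc.C a) = HahnSeries.single 0 a := by
  rw [← RatFunc.algebraMap_C, phi_algebraMap, polyToL]
  simp [algebraMap_laur]

lemma phi_X : phi RatFunc.X = tinv := by
  rw [← RatFunc.algebraMap_X, phi_algebraMap, polyToL]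
  simp


abbrev PS := PowerSeries ℂ

def mp {a b : ℕ} (M : Matrix (Fin a) (Fin b) ℂ) : Matrix (Fin a) (Fin b) PS :=
  M.map (⇑(PowerSeries.C (R := ℂ)))

def pres {a : ℕ} (M : Matrix (Fin a) (Fin a) ℂ) : Matrix (Fin a) (Fin a) PS :=
  (1 - (PowerSeries.X : PS) • mp M)⁻¹

lemma pres_det_isUnit {a : ℕ} (M : Matrix (Fin a) (Fin a) ℂ) :
    IsUnit (1 - (PowerSeries.X : PS) • mp M).det := by
  rw [PowerSeries.isUnit_iff_constantCoeff]
  have : (PowerSeries.constantCoeff (R := ℂ)) (1 - (PowerSeries.X : PS) • mp M).det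
      = Matrix.det (((1 : Matrix (Fin a) (Fin a) PS) - (PowerSeries.X : PS) • mp M).map
          (PowerSeries.constantCoeff (R := ℂ))) := RingHom.map_det _ _
  rw [this]
  have h2 : ((1 : Matrix (Fin a) (Fin a) PS) - (PowerSeries.X : PS) • mp M).map
      (PowerSeries.constantCoeff (R := ℂ)) = 1 := by
    ext i j
    simp [Matrix.map_apply, Matrix.sub_apply, Matrix.smul_apply, Matrix.one_apply, mp,
      smul_eq_mul, _root_.map_mul, apply_ite]
  rw [h2, Matrix.det_one]
  exact isUnit_one

lemma mul_pres {a : ℕ} (M : Matrix (Fin a) (Fin a) ℂ) :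
    (1 - (PowerSeries.X : PS) • mp M) * pres M = 1 :=
  Matrix.mul_nonsing_inv _ (pres_det_isUnit M)

lemma pres_mul {a : ℕ} (M : Matrix (Fin a) (Fin a) ℂ) :
    pres M * (1 - (PowerSeries.X : PS) • mp M) = 1 :=
  Matrix.nonsing_inv_mul _ (pres_det_isUnit M)

def cof {a b : ℕ} (k : ℕ) (N : Matrix (Fin a) (Fin b) PS) : Matrix (Fin a) (Fin b) ℂ :=
  N.map (⇑(PowerSeries.coeff (R := ℂ) k))

lemma cof_add {a b : ℕ} (k : ℕ) (M N : Matrix (Fin a) (Fin b) PS) :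
    cof k (M + N) = cof k M + cof k N := by
  ext i j; simp [cof, Matrix.map_apply]

lemma cof_neg {a b : ℕ} (k : ℕ) (M : Matrix (Fin a) (Fin b) PS) :
    cof k (-M) = -(cof k M) := by
  ext i j; simp [cof, Matrix.map_apply]

lemma cof_mul {a b c : ℕ} (k : ℕ) (M : Matrix (Fin a) (Fin b) PS)
    (N : Matrix (Fin b) (Fin c) PS) :
    cof k (M * N) = ∑ ij ∈ Finset.HasAntidiagonal.antidiagonal k, cof ij.1 M * cof ij.2 N := by
  ext x y
  simp only [cof, Matrix.map_apply, Matrix.mul_apply, map_sum, PowerSeries.coeff_mul,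
    Matrix.sum_apply]
  rw [Finset.sum_comm]

lemma cof_mp_mul {a b c : ℕ} (k : ℕ) (U : Matrix (Fin a) (Fin b) ℂ)
    (N : Matrix (Fin b) (Fin c) PS) :
    cof k (mp U * N) = U * cof k N := by
  ext x y
  simp [cof, mp, Matrix.map_apply, Matrix.mul_apply, PowerSeries.coeff_C_mul]

lemma cof_mul_mp {a b c : ℕ} (k : ℕ) (N : Matrix (Fin a) (Fin b) PS)
    (V : Matrix (Fin b) (Fin c) ℂ) :
    cof k (N * mp V) = cof k N * V := by
  ext x y
  simp [cof, mp, Matrix.map_apply, Matrix.mul_apply, PowerSeries.coeff_mul_C]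

lemma cof_zero_smulX {a b : ℕ} (N : Matrix (Fin a) (Fin b) PS) :
    cof 0 ((PowerSeries.X : PS) • N) = 0 := by
  ext x y
  simp [cof, Matrix.map_apply, Matrix.smul_apply, smul_eq_mul, PowerSeries.coeff_zero_X_mul]

lemma cof_succ_smulX {a b : ℕ} (k : ℕ) (N : Matrix (Fin a) (Fin b) PS) :
    cof (k+1) ((PowerSeries.X : PS) • N) = cof k N := by
  ext x y
  simp [cof, Matrix.map_apply, Matrix.smul_apply, smul_eq_mul, PowerSeries.coeff_succ_X_mul]

lemma cof_one {a : ℕ} : cof 0 (1 : Matrix (Fin a) (Fin a) PS) = 1 := by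
  ext x y
  simp [cof, Matrix.map_apply, Matrix.one_apply, apply_ite]

lemma cof_one_succ {a : ℕ} (k : ℕ) : cof (k+1) (1 : Matrix (Fin a) (Fin a) PS) = 0 := by
  ext x y
  simp [cof, Matrix.map_apply, Matrix.one_apply, apply_ite]

lemma pres_eq {a : ℕ} (M : Matrix (Fin a) (Fin a) ℂ) :
    pres M = 1 + (PowerSeries.X : PS) • (mp M * pres M) := by
  have h := mul_pres M
  rw [sub_mul, one_mul, Matrix.smul_mul] at h
  rw [← h]
  abel

lemma cof_pres {a : ℕ} (M : Matrix (Fin a) (Fin a) ℂ) (k : ℕ) :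
    cof k (pres M) = M ^ k := by
  induction k with
  | zero =>
    rw [pres_eq M, cof_add, cof_one, cof_zero_smulX, pow_zero, add_zero]
  | succ k ih =>
    rw [pres_eq M, cof_add, cof_one_succ, cof_succ_smulX, cof_mp_mul, ih, zero_add,
      pow_succ']

-- Part 3: transfer
def iom {a b : ℕ} (N : Matrix (Fin a) (Fin b) PS) : Matrix (Fin a) (Fin b) Laur :=
  N.map (⇑(HahnSeries.ofPowerSeries ℤ ℂ))

def phm {a b : ℕ} (N : Matrix (Fin a) (Fin b) (RatFunc ℂ)) : Matrix (Fin a) (Fin b) Laur :=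
  N.map (⇑phi)

def Xl : Laur := HahnSeries.single (1:ℤ) 1

lemma tinv_mul_Xl : tinv * Xl = 1 := by
  rw [tinv, Xl, HahnSeries.single_mul_single]
  norm_num [HahnSeries.single_zero_one]

lemma iom_mul {a b c : ℕ} (M : Matrix (Fin a) (Fin b) PS) (N : Matrix (Fin b) (Fin c) PS) :
    iom (M * N) = iom M * iom N := Matrix.map_mul

lemma iom_inj {a b : ℕ} : Function.Injective (iom (a := a) (b := b)) := by
  intro M N h
  refine Matrix.ext fun i j => ?_
  apply HahnSeries.ofPowerSeries_injective (Γ := ℤ) (R := ℂ)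
  have := congrFun (congrFun (congrArg (fun (Q : Matrix (Fin a) (Fin b) Laur) (i : Fin a) (j : Fin b) => Q i j) h) i) j
  simpa [iom, Matrix.map_apply] using this

lemma xsmul_iom {a b : ℕ} (N : Matrix (Fin a) (Fin b) PS) :
    Xl • iom N = iom ((PowerSeries.X : PS) • N) := by
  ext i j
  simp only [iom, Matrix.smul_apply, Matrix.map_apply, smul_eq_mul, _root_.map_mul]
  rw [HahnSeries.ofPowerSeries_X, Xl]

lemma phm_mc {a b : ℕ} (M : Matrix (Fin a) (Fin b) ℂ) : phm (mc M) = iom (mp M) := by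
  ext i j
  simp only [phm, mc, iom, mp, Matrix.map_apply, phi_C, HahnSeries.ofPowerSeries_C,
    HahnSeries.C_apply]

lemma phm_mul {a b c : ℕ} (M : Matrix (Fin a) (Fin b) (RatFunc ℂ))
    (N : Matrix (Fin b) (Fin c) (RatFunc ℂ)) : phm (M * N) = phm M * phm N := Matrix.map_mul

lemma phm_add {a b : ℕ} (M N : Matrix (Fin a) (Fin b) (RatFunc ℂ)) :
    phm (M + N) = phm M + phm N := by
  ext i j; simp [phm, Matrix.map_apply]

lemma phm_neg {a b : ℕ} (M : Matrix (Fin a) (Fin b) (RatFunc ℂ)) :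
    phm (-M) = -(phm M) := by
  ext i j; simp [phm, Matrix.map_apply]

lemma phm_one {a : ℕ} : phm (1 : Matrix (Fin a) (Fin a) (RatFunc ℂ)) = 1 := by
  ext i j; simp [phm, Matrix.map_apply, Matrix.one_apply, apply_ite]

lemma det_res_isUnit {a : ℕ} (M : Matrix (Fin a) (Fin a) ℂ) :
    IsUnit (Matrix.scalar (Fin a) (RatFunc.X : RatFunc ℂ) - mc M).det := by
  have hmat : Matrix.scalar (Fin a) (RatFunc.X : RatFunc ℂ) - mc M
      = (charmatrix M).map (⇑(algebraMap ℂ[X] (RatFunc ℂ))) := by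
    ext i j
    rw [Matrix.map_apply, charmatrix_apply]
    simp only [Matrix.sub_apply, Matrix.scalar_apply, mc, Matrix.map_apply, map_sub,
      RatFunc.algebraMap_C, Matrix.diagonal, Matrix.of_apply]
    by_cases h : i = j <;> simp [h, RatFunc.algebraMap_X]
  rw [hmat, ← RingHom.mapMatrix_apply, ← RingHom.map_det]
  rw [isUnit_iff_ne_zero]
  intro hz
  have : M.charpoly = 0 := by
    apply IsFractionRing.injective ℂ[X] (RatFunc ℂ)
    simpa [Matrix.charpoly] using hz
  exact (Matrix.charpoly_monic M).ne_zero this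

lemma res_spec {a : ℕ} (M : Matrix (Fin a) (Fin a) ℂ) :
    (Matrix.scalar (Fin a) (RatFunc.X : RatFunc ℂ) - mc M) * res M = 1 ∧
    res M * (Matrix.scalar (Fin a) (RatFunc.X : RatFunc ℂ) - mc M) = 1 :=
  ⟨Matrix.mul_nonsing_inv _ (det_res_isUnit M), Matrix.nonsing_inv_mul _ (det_res_isUnit M)⟩

lemma phm_scalar_sub {a : ℕ} (M : Matrix (Fin a) (Fin a) ℂ) :
    phm (Matrix.scalar (Fin a) (RatFunc.X : RatFunc ℂ) - mc M)
      = Matrix.scalar (Fin a) tinv - iom (mp M) := by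
  ext i j
  simp only [phm, Matrix.map_apply, Matrix.sub_apply, map_sub, Matrix.scalar_apply,
    Matrix.diagonal, Matrix.of_apply, mc, iom, mp, phi_C, HahnSeries.ofPowerSeries_C,
    HahnSeries.C_apply]
  by_cases h : i = j <;> simp [h, phi_X]

lemma scalar_mul_eq_smul {a b : ℕ} (x : Laur) (N : Matrix (Fin a) (Fin b) Laur) :
    Matrix.scalar (Fin a) x * N = x • N := by
  rw [Matrix.smul_eq_diagonal_mul]
  rfl

lemma iom_one {a : ℕ} : iom (1 : Matrix (Fin a) (Fin a) PS) = 1 := by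
  ext i j; simp [iom, Matrix.map_apply, Matrix.one_apply, apply_ite]

lemma phm_res {a : ℕ} (M : Matrix (Fin a) (Fin a) ℂ) :
    phm (res M) = iom ((PowerSeries.X : PS) • pres M) := by
  set U := Matrix.scalar (Fin a) (RatFunc.X : RatFunc ℂ) - mc M with hUdef
  have h2 : phm (res M) * phm U = 1 := by
    rw [← phm_mul, (res_spec M).2, phm_one]
  have h3 : phm U * (Matrix.scalar (Fin a) Xl * iom (pres M)) = 1 := by
    rw [phm_scalar_sub, sub_mul, ← mul_assoc, ← mul_assoc, ← _root_.map_mul,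
      tinv_mul_Xl, _root_.map_one, one_mul,
      (Matrix.scalar_commute Xl (fun r' => mul_comm Xl r') (iom (mp M))).symm.eq,
      mul_assoc, ← iom_mul, scalar_mul_eq_smul, xsmul_iom]
    rw [show iom (pres M) - iom ((PowerSeries.X : PS) • (mp M * pres M))
        = iom (pres M - (PowerSeries.X : PS) • (mp M * pres M)) by
      ext i j; simp [iom, Matrix.map_apply]]
    rw [show pres M - (PowerSeries.X : PS) • (mp M * pres M)
        = (1 - (PowerSeries.X : PS) • mp M) * pres M by
      rw [sub_mul, one_mul, Matrix.smul_mul]]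
    rw [mul_pres, iom_one]
  have h4 : Matrix.scalar (Fin a) Xl * iom (pres M) = iom ((PowerSeries.X : PS) • pres M) := by
    rw [scalar_mul_eq_smul, xsmul_iom]
  calc phm (res M) = phm (res M) * (phm U * (Matrix.scalar (Fin a) Xl * iom (pres M))) := by
        rw [h3, mul_one]
    _ = (phm (res M) * phm U) * (Matrix.scalar (Fin a) Xl * iom (pres M)) := by rw [mul_assoc]
    _ = iom ((PowerSeries.X : PS) • pres M) := by rw [h2, one_mul, h4]

-- Part 4: coefficient identities
lemma cof_mp_zero {a b : ℕ} (U : Matrix (Fin a) (Fin b) ℂ) : cof 0 (mp U) = U := by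
  ext i j; simp [cof, mp, Matrix.map_apply]

lemma cof_mp_succ {a b : ℕ} (k : ℕ) (U : Matrix (Fin a) (Fin b) ℂ) : cof (k+1) (mp U) = 0 := by
  ext i j; simp [cof, mp, Matrix.map_apply, PowerSeries.coeff_C]

lemma cof_triple {a b c d : ℕ} (k : ℕ) (U : Matrix (Fin a) (Fin b) ℂ)
    (N : Matrix (Fin b) (Fin c) PS) (V : Matrix (Fin c) (Fin d) ℂ) :
    cof k (mp U * N * mp V) = U * cof k N * V := by
  rw [cof_mul_mp, cof_mp_mul]

lemma cof_mul_range {a b c : ℕ} (k : ℕ) (M : Matrix (Fin a) (Fin b) PS)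
    (N : Matrix (Fin b) (Fin c) PS) :
    cof k (M * N) = ∑ i ∈ Finset.range (k+1), cof i M * cof (k-i) N := by
  rw [cof_mul, Finset.Nat.sum_antidiagonal_eq_sum_range_succ_mk]

section part4

variable {n p q r m : ℕ} (A : Matrix (Fin n) (Fin n) ℂ) (B : Matrix (Fin n) (Fin q) ℂ)
  (C : Matrix (Fin p) (Fin n) ℂ) (D : Matrix (Fin p) (Fin q) ℂ)
  (H : Matrix (Fin q) (Fin r) ℂ) (L : Matrix (Fin r) (Fin r) ℂ)
  (G : Matrix (Fin r) (Fin m) ℂ) (S : Matrix (Fin n) (Fin m) ℂ)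

lemma cof_F1_zero : cof 0 (mp D + mp C * ((PowerSeries.X:PS) • pres A) * mp B) = D := by
  rw [cof_add, cof_mp_zero, cof_triple, cof_zero_smulX, Matrix.mul_zero, Matrix.zero_mul,
    add_zero]

lemma cof_F1_succ (i : ℕ) :
    cof (i+1) (mp D + mp C * ((PowerSeries.X:PS) • pres A) * mp B) = C * A^i * B := by
  rw [cof_add, cof_mp_succ, cof_triple, cof_succ_smulX, cof_pres, zero_add]

lemma cof_F2_zero : cof 0 (mp H * ((PowerSeries.X:PS) • pres L) * mp G) = 0 := by
  rw [cof_triple, cof_zero_smulX, Matrix.mul_zero, Matrix.zero_mul]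

lemma cof_F2_succ (j : ℕ) :
    cof (j+1) (mp H * ((PowerSeries.X:PS) • pres L) * mp G) = H * L^j * G := by
  rw [cof_triple, cof_succ_smulX, cof_pres]

lemma star_id
    (hPS : (mp D + mp C * ((PowerSeries.X:PS) • pres A) * mp B)
        * (mp H * ((PowerSeries.X:PS) • pres L) * mp G)
      = -(mp C * ((PowerSeries.X:PS) • pres A) * mp S)) (k : ℕ) :
    D * (H * L^k * G) + (∑ i ∈ Finset.range k, C * A^i * B * (H * L^(k-1-i) * G))
      + C * A^k * S = 0 := by
  have h := congrArg (cof (k+1)) hPS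
  rw [cof_mul_range, cof_neg, cof_triple, cof_succ_smulX, cof_pres] at h
  rw [Finset.sum_range_succ, Nat.sub_self, cof_F2_zero, Matrix.mul_zero, add_zero,
    Finset.sum_range_succ'] at h
  simp only [Nat.sub_zero, Nat.succ_sub_succ, cof_F1_zero, cof_F1_succ, cof_F2_succ] at h
  have hterm : ∀ i ∈ Finset.range k,
      C * A^i * B * cof (k-i) (mp H * ((PowerSeries.X:PS) • pres L) * mp G)
        = C * A^i * B * (H * L^(k-1-i) * G) := by
    intro i hi
    have hi' : i < k := Finset.mem_range.mp hi
    have e : k - i = (k-1-i) + 1 := by omega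
    rw [e, cof_F2_succ]
  rw [Finset.sum_congr rfl hterm] at h
  have h2 := eq_neg_iff_add_eq_zero.mp h
  rw [← h2]
  abel

def Mk : ℕ → Matrix (Fin n) (Fin m) ℂ
  | 0 => S
  | (k+1) => A * Mk k + B * (H * L^k * G)

lemma Mk_closed (k : ℕ) :
    Mk A B H L G S k = A^k * S + ∑ i ∈ Finset.range k, A^i * B * (H * L^(k-1-i) * G) := by
  induction k with
  | zero => simp [Mk]
  | succ k ih =>
    rw [show Mk A B H L G S (k+1) = A * Mk A B H L G S k + B * (H * L^k * G) from rfl, ih,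
      Matrix.mul_add, Matrix.mul_sum, Finset.sum_range_succ']
    have h1 : ∀ i ∈ Finset.range k,
        A * (A^i * B * (H * L^(k-1-i) * G)) = A^(i+1) * B * (H * L^(k+1-1-(i+1)) * G) := by
      intro i hi
      have hi' : i < k := Finset.mem_range.mp hi
      have e : k + 1 - 1 - (i+1) = k - 1 - i := by omega
      rw [e, pow_succ']
      simp only [Matrix.mul_assoc]
    rw [Finset.sum_congr rfl h1, ← Matrix.mul_assoc, ← pow_succ']
    have h2 : A^0 * B * (H * L^(k+1-1-0) * G) = B * (H * L^k * G) := by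
      norm_num
    rw [h2]
    abel

lemma keyL
    (hPS : (mp D + mp C * ((PowerSeries.X:PS) • pres A) * mp B)
        * (mp H * ((PowerSeries.X:PS) • pres L) * mp G)
      = -(mp C * ((PowerSeries.X:PS) • pres A) * mp S)) (k : ℕ) :
    C * Mk A B H L G S k + D * (H * L^k * G) = 0 := by
  rw [Mk_closed, Matrix.mul_add, Matrix.mul_sum]
  have h1 : ∀ i ∈ Finset.range k,
      C * (A^i * B * (H * L^(k-1-i) * G)) = C * A^i * B * (H * L^(k-1-i) * G) := by
    intro i _
    simp only [Matrix.mul_assoc]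
  rw [Finset.sum_congr rfl h1, ← Matrix.mul_assoc]
  have h := star_id A B C D H L G S hPS k
  rw [← h]
  abel

lemma At_Mk (t k : ℕ) :
    A^t * Mk A B H L G S k
      = Mk A B H L G S (t+k) - ∑ i ∈ Finset.range t, A^(t-1-i) * B * (H * L^(i+k) * G) := by
  induction t generalizing k with
  | zero => simp [pow_zero, Matrix.one_mul]
  | succ t ih =>
    have hA : A * Mk A B H L G S k = Mk A B H L G S (k+1) - B * (H * L^k * G) := by
      rw [show Mk A B H L G S (k+1) = A * Mk A B H L G S k + B * (H * L^k * G) from rfl]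
      abel
    rw [pow_succ, Matrix.mul_assoc, hA, Matrix.mul_sub, ih (k+1)]
    have e1 : t + (k+1) = t + 1 + k := by omega
    rw [e1, Finset.sum_range_succ']
    have h1 : ∀ i ∈ Finset.range t,
        A^(t-1-i) * B * (H * L^(i+(k+1)) * G) = A^(t+1-1-(i+1)) * B * (H * L^((i+1)+k) * G) := by
      intro i _
      have e2 : t + 1 - 1 - (i+1) = t - 1 - i := by omega
      have e3 : i + (k+1) = (i+1) + k := by omega
      rw [e2, e3]
    rw [Finset.sum_congr rfl h1]
    have h2 : A^(t+1-1-0) * B * (H * L^(0+k) * G) = A^t * (B * (H * L^k * G)) := by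
      have e4 : t + 1 - 1 - 0 = t := by omega
      rw [e4, Nat.zero_add, Matrix.mul_assoc]
    rw [h2]
    abel

lemma dagger
    (hPS : (mp D + mp C * ((PowerSeries.X:PS) • pres A) * mp B)
        * (mp H * ((PowerSeries.X:PS) • pres L) * mp G)
      = -(mp C * ((PowerSeries.X:PS) • pres A) * mp S)) (t k : ℕ) :
    (C * A^t) * Mk A B H L G S k
      + (D * (H * L^t) + ∑ i ∈ Finset.range t, C * A^(t-1-i) * B * (H * L^i)) * (L^k * G)
      = 0 := by
  rw [Matrix.mul_assoc, At_Mk, Matrix.mul_sub, Matrix.mul_sum, Matrix.add_mul,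
    Matrix.sum_mul]
  have h1 : ∀ i ∈ Finset.range t,
      C * (A^(t-1-i) * B * (H * L^(i+k) * G))
        = C * A^(t-1-i) * B * (H * L^i) * (L^k * G) := by
    intro i _
    rw [pow_add]
    simp only [Matrix.mul_assoc]
  rw [Finset.sum_congr rfl h1]
  have h2 : D * (H * L^t) * (L^k * G) = D * (H * L^(t+k) * G) := by
    rw [pow_add]
    simp only [Matrix.mul_assoc]
  rw [h2]
  have h3 := keyL A B C D H L G S hPS (t+k)
  have h4 : C * Mk A B H L G S (t+k) = -(D * (H * L^(t+k) * G)) :=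
    eq_neg_of_add_eq_zero_left h3
  rw [h4]
  abel

end part4

-- Part 5: linear algebra
lemma mat_ext_of_single {a b : ℕ} {M N : Matrix (Fin a) (Fin b) ℂ}
    (h : ∀ j, M *ᵥ Pi.single j 1 = N *ᵥ Pi.single j 1) : M = N := by
  ext i j
  have := congrFun (h j) i
  simpa [Matrix.mulVec_single] using this

lemma mat_ext_of_span {a b : ℕ} {M N : Matrix (Fin a) (Fin b) ℂ} {s : Set (Fin b → ℂ)}
    (hs : Submodule.span ℂ s = ⊤) (h : ∀ x ∈ s, M *ᵥ x = N *ᵥ x) : M = N := by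
  have hl : M.mulVecLin = N.mulVecLin := LinearMap.ext_on hs h
  apply mat_ext_of_single
  intro j
  exact congrFun (congrArg (⇑) hl) (Pi.single j 1)

section part5

variable {n p q r m : ℕ} (A : Matrix (Fin n) (Fin n) ℂ) (B : Matrix (Fin n) (Fin q) ℂ)
  (C : Matrix (Fin p) (Fin n) ℂ) (D : Matrix (Fin p) (Fin q) ℂ)
  (H : Matrix (Fin q) (Fin r) ℂ) (L : Matrix (Fin r) (Fin r) ℂ)
  (G : Matrix (Fin r) (Fin m) ℂ) (S : Matrix (Fin n) (Fin m) ℂ)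

def gen (k : ℕ) (j : Fin m) : (Fin r → ℂ) × (Fin n → ℂ) :=
  ((L^k * G) *ᵥ Pi.single j 1, Mk A B H L G S k *ᵥ Pi.single j 1)

def Zsub : Submodule ℂ ((Fin r → ℂ) × (Fin n → ℂ)) :=
  Submodule.span ℂ (Set.range fun kj : ℕ × Fin m => gen A B H L G S kj.1 kj.2)

lemma span_fst (hctrb : Controllable L G) :
    Submodule.span ℂ
      (Set.range fun kj : ℕ × Fin m => (L^kj.1 * G) *ᵥ Pi.single kj.2 (1:ℂ)) = ⊤ := by
  by_contra hne
  have hlt : Submodule.span ℂ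
      (Set.range fun kj : ℕ × Fin m => (L^kj.1 * G) *ᵥ Pi.single kj.2 (1:ℂ)) < ⊤ :=
    lt_top_iff_ne_top.mpr hne
  obtain ⟨f, hf0, hfmap⟩ := Submodule.exists_dual_map_eq_bot_of_lt_top hlt inferInstance
  set y : Fin r → ℂ := fun i => f (Pi.single i 1) with hy
  have hfx : ∀ (w : Fin r → ℂ), f w = ∑ i, w i * y i := by
    intro w
    rw [LinearMap.pi_apply_eq_sum_univ f w]
    refine Finset.sum_congr rfl fun i _ => ?_
    rw [smul_eq_mul, hy]
    congr 1
    congr 1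
    funext j
    simp [Pi.single_apply, eq_comm]
  have hyv : ∀ k, y ᵥ* (L^k * G) = 0 := by
    intro k
    funext j
    have hmem : (L^k * G) *ᵥ Pi.single j (1:ℂ) ∈ Submodule.span ℂ
        (Set.range fun kj : ℕ × Fin m => (L^kj.1 * G) *ᵥ Pi.single kj.2 (1:ℂ)) :=
      Submodule.subset_span ⟨(k, j), rfl⟩
    have hz : f ((L^k * G) *ᵥ Pi.single j (1:ℂ)) = 0 := by
      have h1 : f ((L^k * G) *ᵥ Pi.single j (1:ℂ)) ∈ (⊥ : Submodule ℂ ℂ) := by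
        rw [← hfmap]
        exact Submodule.mem_map_of_mem hmem
      simpa using h1
    rw [hfx] at hz
    rw [Pi.zero_apply]
    have heq : (y ᵥ* (L^k * G)) j = ∑ i, ((L^k * G) *ᵥ Pi.single j (1:ℂ)) i * y i := by
      simp [Matrix.vecMul, dotProduct, Matrix.mulVec_single, mul_comm]
    rw [heq]
    exact hz
  have hy0 : y = 0 := hctrb y hyv
  apply hf0
  apply LinearMap.ext
  intro w
  rw [hfx w, hy0]
  simp

lemma Zsub_fst_top (hctrb : Controllable L G) :
    Submodule.map (LinearMap.fst ℂ (Fin r → ℂ) (Fin n → ℂ)) (Zsub A B H L G S) = ⊤ := by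
  rw [Zsub, Submodule.map_span, ← Set.range_comp]
  exact span_fst L G hctrb

def Wt (t : ℕ) : Matrix (Fin p) (Fin r) ℂ :=
  D * (H * L^t) + ∑ i ∈ Finset.range t, C * A^(t-1-i) * B * (H * L^i)

def Lt (t : ℕ) : ((Fin r → ℂ) × (Fin n → ℂ)) →ₗ[ℂ] (Fin p → ℂ) :=
  (Matrix.mulVecLin (C * A^t)).comp (LinearMap.snd ℂ (Fin r → ℂ) (Fin n → ℂ))
    + (Matrix.mulVecLin (Wt A B C D H L t)).comp (LinearMap.fst ℂ (Fin r → ℂ) (Fin n → ℂ))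

lemma Z_le_ker
    (hPS : (mp D + mp C * ((PowerSeries.X:PS) • pres A) * mp B)
        * (mp H * ((PowerSeries.X:PS) • pres L) * mp G)
      = -(mp C * ((PowerSeries.X:PS) • pres A) * mp S)) (t : ℕ) :
    Zsub A B H L G S ≤ LinearMap.ker (Lt A B C D H L t) := by
  rw [Zsub, Submodule.span_le]
  rintro _ ⟨⟨k, j⟩, rfl⟩
  rw [SetLike.mem_coe, LinearMap.mem_ker]
  show (C * A^t) *ᵥ (Mk A B H L G S k *ᵥ Pi.single j 1)
      + (Wt A B C D H L t) *ᵥ ((L^k * G) *ᵥ Pi.single j 1) = 0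
  rw [Matrix.mulVec_mulVec, Matrix.mulVec_mulVec, ← Matrix.add_mulVec]
  rw [show (C * A^t) * Mk A B H L G S k + Wt A B C D H L t * (L^k * G) = 0 from by
    rw [Wt]; exact dagger A B C D H L G S hPS t k]
  rw [Matrix.zero_mulVec]

lemma Z_inj (hobs : Observable C A)
    (hPS : (mp D + mp C * ((PowerSeries.X:PS) • pres A) * mp B)
        * (mp H * ((PowerSeries.X:PS) • pres L) * mp G)
      = -(mp C * ((PowerSeries.X:PS) • pres A) * mp S)) :
    ∀ z ∈ Zsub A B H L G S, z.1 = 0 → z.2 = 0 := by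
  intro z hz h1
  apply hobs
  intro t
  have hk := Z_le_ker A B C D H L G S hPS t hz
  rw [LinearMap.mem_ker] at hk
  have : (C * A^t) *ᵥ z.2 + (Wt A B C D H L t) *ᵥ z.1 = 0 := hk
  rw [h1, Matrix.mulVec_zero, add_zero, ← Matrix.mulVec_mulVec] at this
  exact this

end part5

lemma iom_add {a b : ℕ} (M N : Matrix (Fin a) (Fin b) PS) : iom (M + N) = iom M + iom N := by
  ext i j; simp [iom, Matrix.map_apply]

lemma iom_neg {a b : ℕ} (M : Matrix (Fin a) (Fin b) PS) : iom (-M) = -(iom M) := by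
  ext i j; simp [iom, Matrix.map_apply]

/-- from the rational identity `F · H(zI−Λ)⁻¹G = −C(zI−A)⁻¹S` with `(C,A)`
observable and `(Λ,G)` controllable one obtains `Π` with `AΠ+BH=ΠΛ`, `CΠ+DH=0`, `ΠG=S`. -/
theorem stmt6 {n p q r m : ℕ}
    (A : Matrix (Fin n) (Fin n) ℂ) (B : Matrix (Fin n) (Fin q) ℂ)
    (C : Matrix (Fin p) (Fin n) ℂ) (D : Matrix (Fin p) (Fin q) ℂ)
    (H : Matrix (Fin q) (Fin r) ℂ) (Λ : Matrix (Fin r) (Fin r) ℂ)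
    (G : Matrix (Fin r) (Fin m) ℂ) (S : Matrix (Fin n) (Fin m) ℂ)
    (hobs : Observable C A) (hctrb : Controllable Λ G)
    (hid : (mc D + mc C * res A * mc B) * (mc H * res Λ * mc G)
        = -(mc C * res A * mc S)) :
    ∃ Pm : Matrix (Fin n) (Fin r) ℂ,
      A * Pm + B * H = Pm * Λ ∧ C * Pm + D * H = 0 ∧ Pm * G = S := by
  classical
  have hph := congrArg phm hid
  simp only [phm_mul, phm_add, phm_neg, phm_mc, phm_res] at hph
  simp only [← iom_mul, ← iom_add, ← iom_neg] at hph
  have hPS : (mp D + mp C * ((PowerSeries.X:PS) • pres A) * mp B)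
      * (mp H * ((PowerSeries.X:PS) • pres Λ) * mp G)
      = -(mp C * ((PowerSeries.X:PS) • pres A) * mp S) := iom_inj hph
  set Z := Zsub A B H Λ G S with hZdef
  set p1 := (LinearMap.fst ℂ (Fin r → ℂ) (Fin n → ℂ)).comp Z.subtype with hp1
  have hp1app : ∀ z : Z, p1 z = (z : (Fin r → ℂ) × (Fin n → ℂ)).1 := fun z => rfl
  have hinj : Function.Injective p1 := by
    intro z w hzw
    rw [hp1app, hp1app] at hzw
    have hu : ((z : (Fin r → ℂ) × (Fin n → ℂ)) - (w : (Fin r → ℂ) × (Fin n → ℂ))) ∈ Z :=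
      sub_mem z.2 w.2
    have h1 : ((z : (Fin r → ℂ) × (Fin n → ℂ)) - (w : (Fin r → ℂ) × (Fin n → ℂ))).1 = 0 := by
      rw [Prod.fst_sub, hzw, sub_self]
    have h2 := Z_inj A B C D H Λ G S hobs hPS _ hu h1
    rw [Prod.snd_sub, sub_eq_zero] at h2
    apply Subtype.ext
    exact Prod.ext hzw h2
  have hsurj : Function.Surjective p1 := by
    rw [← LinearMap.range_eq_top, hp1, LinearMap.range_comp, Submodule.range_subtype]
    exact Zsub_fst_top A B H Λ G S hctrb
  let e := LinearEquiv.ofBijective p1 ⟨hinj, hsurj⟩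
  let T := ((LinearMap.snd ℂ (Fin r → ℂ) (Fin n → ℂ)).comp Z.subtype).comp e.symm.toLinearMap
  have hT : ∀ x v, (x, v) ∈ Z → T x = v := by
    intro x v hxv
    have h1 : ((e.symm x : Z) : (Fin r → ℂ) × (Fin n → ℂ)).1 = x := by
      have h := e.apply_symm_apply x
      rw [show e (e.symm x) = p1 (e.symm x) from rfl, hp1app] at h
      exact h
    have hu : (((x, v) : (Fin r → ℂ) × (Fin n → ℂ))
        - ((e.symm x : Z) : (Fin r → ℂ) × (Fin n → ℂ))) ∈ Z :=
      sub_mem hxv (e.symm x).2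
    have h2 : (((x, v) : (Fin r → ℂ) × (Fin n → ℂ))
        - ((e.symm x : Z) : (Fin r → ℂ) × (Fin n → ℂ))).1 = 0 := by
      rw [Prod.fst_sub, h1, sub_self]
    have h3 := Z_inj A B C D H Λ G S hobs hPS _ hu h2
    rw [Prod.snd_sub, sub_eq_zero] at h3
    exact h3.symm
  set Pm := LinearMap.toMatrix' T with hPmdef
  have hPmV : ∀ x, Pm *ᵥ x = T x := by
    intro x
    rw [← Matrix.toLin'_apply, hPmdef, Matrix.toLin'_toMatrix']
  have hgen : ∀ (k : ℕ) (j : Fin m),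
      ((Λ^k * G) *ᵥ Pi.single j 1, Mk A B H Λ G S k *ᵥ Pi.single j 1) ∈ Z :=
    fun k j => Submodule.subset_span ⟨(k, j), rfl⟩
  refine ⟨Pm, ?_, ?_, ?_⟩
  · apply mat_ext_of_span (span_fst Λ G hctrb)
    rintro _ ⟨⟨k, j⟩, rfl⟩
    have hTx := hT _ _ (hgen k j)
    have hTx' := hT _ _ (hgen (k+1) j)
    rw [Matrix.add_mulVec, ← Matrix.mulVec_mulVec (M := A) (N := Pm), hPmV, hTx,
      Matrix.mulVec_mulVec, Matrix.mulVec_mulVec, ← Matrix.add_mulVec,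
      ← Matrix.mulVec_mulVec (M := Pm) (N := Λ), hPmV,
      Matrix.mulVec_mulVec, show Λ * (Λ^k * G) = Λ^(k+1) * G from by
        rw [← Matrix.mul_assoc, ← pow_succ'], hTx']
    congr 1
    rw [show Mk A B H Λ G S (k+1) = A * Mk A B H Λ G S k + B * (H * Λ^k * G) from rfl]
    congr 1
    simp only [Matrix.mul_assoc]
  · apply mat_ext_of_span (span_fst Λ G hctrb)
    rintro _ ⟨⟨k, j⟩, rfl⟩
    have hTx := hT _ _ (hgen k j)
    rw [Matrix.add_mulVec, ← Matrix.mulVec_mulVec (M := C) (N := Pm), hPmV, hTx,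
      Matrix.mulVec_mulVec, Matrix.mulVec_mulVec, ← Matrix.add_mulVec, Matrix.zero_mulVec]
    rw [show C * Mk A B H Λ G S k + D * H * (Λ^k * G) = 0 from by
      have h := keyL A B C D H Λ G S hPS k
      rw [← h]
      congr 1
      simp only [Matrix.mul_assoc]]
    rw [Matrix.zero_mulVec]
  · apply mat_ext_of_single
    intro j
    have hg0 : (G *ᵥ Pi.single j 1, S *ᵥ Pi.single j 1) ∈ Z := by
      have := hgen 0 j
      rw [pow_zero, Matrix.one_mul] at this
      exact this
    rw [← Matrix.mulVec_mulVec, hPmV, hT _ _ hg0]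
end
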